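/- Let Δ̃ be a real N×m matrix, λ > 0, A = Δ̃ᵀΔ̃ + λI, and 𝟏 ∈ ℝᵐ the all-ones vector. Define α̃ = A⁻¹𝟏 / (𝟏ᵀA⁻¹𝟏). Then ‖α̃‖₂² ≤ (λ + ‖Δ̃‖²) / (m·λ), where ‖Δ̃‖ is the operator norm of Δ̃. -/

import Mathlib

open Matrix
open scoped Matrix.Norms.L2Operator

/-- First bound of Proposition 1: the regularized Anderson acceleration coefficient vector
`α̃ = (Δ̃ᵀΔ̃ + λI)⁻¹𝟏 / (𝟏ᵀ(Δ̃ᵀΔ̃ + λI)⁻¹𝟏)` satisfies `‖α̃‖² ≤ (λ + ‖Δ̃‖²)/(mλ)`. -/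
theorem raa_coefficient_norm_bound
    {N m : ℕ} (hm : 0 < m) (Δ : Matrix (Fin N) (Fin m) ℝ) (lam : ℝ) (hlam : 0 < lam)
    (A : Matrix (Fin m) (Fin m) ℝ)
    (hA : A = Δᵀ * Δ + lam • (1 : Matrix (Fin m) (Fin m) ℝ))
    (α : Fin m → ℝ)
    (hα : α = (1 / ((1 : Fin m → ℝ) ⬝ᵥ A⁻¹.mulVec 1)) • A⁻¹.mulVec 1) :
    ∑ i, α i ^ 2 ≤ (lam + ‖Δ‖ ^ 2) / (m * lam) := by
  have dpnn : ∀ {k : ℕ} (w : Fin k → ℝ), 0 ≤ w ⬝ᵥ w := fun w =>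
    Finset.sum_nonneg fun i _ => mul_self_nonneg _
  -- A is positive definite
  have hPD : A.PosDef := by
    have h1 : (Δᵀ * Δ).PosSemidef := by
      simpa using Matrix.posSemidef_conjTranspose_mul_self Δ
    have h2 : (lam • (1 : Matrix (Fin m) (Fin m) ℝ)).PosDef := by
      refine Matrix.PosDef.of_dotProduct_mulVec_pos ?_ ?_
      · simp [Matrix.IsHermitian]
      · intro x hx
        simp only [Matrix.smul_mulVec, Matrix.one_mulVec, dotProduct_smul,
          smul_eq_mul]
        exact mul_pos hlam (Matrix.dotProduct_star_self_pos_iff.mpr hx)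
    rw [hA]
    exact Matrix.PosDef.posSemidef_add h1 h2
  set v : Fin m → ℝ := A⁻¹.mulVec 1 with hv
  have hdet : IsUnit A.det := isUnit_iff_ne_zero.mpr (ne_of_gt hPD.det_pos)
  have hAv : A.mulVec v = 1 := by
    rw [hv, Matrix.mulVec_mulVec, Matrix.mul_nonsing_inv A hdet, Matrix.one_mulVec]
  -- quadratic form identity
  have hquad : ∀ x y : Fin m → ℝ,
      x ⬝ᵥ A.mulVec y = (Δ.mulVec x) ⬝ᵥ (Δ.mulVec y) + lam * (x ⬝ᵥ y) := by
    intro x y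
    rw [hA, Matrix.add_mulVec, dotProduct_add, Matrix.smul_mulVec,
      Matrix.one_mulVec, dotProduct_smul, smul_eq_mul, ← Matrix.mulVec_mulVec,
      Matrix.dotProduct_mulVec x, Matrix.vecMul_transpose]
  have h1v : (1 : Fin m → ℝ) ⬝ᵥ A.mulVec v = (m : ℝ) := by
    rw [hAv]; simp [dotProduct, Finset.card_univ]
  have h11 : (1 : Fin m → ℝ) ⬝ᵥ (1 : Fin m → ℝ) = (m : ℝ) := by
    simp [dotProduct, Finset.card_univ]
  set s : ℝ := (1 : Fin m → ℝ) ⬝ᵥ v with hs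
  set T : ℝ := (1 : Fin m → ℝ) ⬝ᵥ A.mulVec 1 with hT
  have hvAv : v ⬝ᵥ A.mulVec v = s := by rw [hAv]; simp [hs, dotProduct, mul_comm]
  -- Cauchy–Schwarz: m^2 ≤ T * s
  have hCS : (m : ℝ) ^ 2 ≤ T * s := by
    have key := Finset.sum_mul_sq_le_sq_mul_sq Finset.univ
      (Sum.elim (Δ.mulVec (1 : Fin m → ℝ)) (fun _ : Fin m => Real.sqrt lam))
      (Sum.elim (Δ.mulVec v) (fun i : Fin m => Real.sqrt lam * v i))
    rw [Fintype.sum_sum_type, Fintype.sum_sum_type, Fintype.sum_sum_type] at key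
    simp only [Sum.elim_inl, Sum.elim_inr] at key
    have hsq : Real.sqrt lam ^ 2 = lam := Real.sq_sqrt hlam.le
    have e1 : ∑ a : Fin N, Δ.mulVec 1 a * Δ.mulVec v a
        = (Δ.mulVec (1:Fin m → ℝ)) ⬝ᵥ (Δ.mulVec v) := rfl
    have e2 : ∑ b : Fin m, Real.sqrt lam * (Real.sqrt lam * v b)
        = lam * ((1 : Fin m → ℝ) ⬝ᵥ v) := by
      have h : ∀ b, Real.sqrt lam * (Real.sqrt lam * v b) = lam * v b := by
        intro b; rw [← mul_assoc, ← sq, hsq]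
      simp_rw [h]
      simp [dotProduct, Finset.mul_sum]
    have e3 : ∑ a : Fin N, Δ.mulVec 1 a ^ 2
        = (Δ.mulVec (1:Fin m → ℝ)) ⬝ᵥ (Δ.mulVec (1:Fin m → ℝ)) := by
      simp [dotProduct, sq]
    have e3v : ∑ a : Fin N, Δ.mulVec v a ^ 2
        = (Δ.mulVec v) ⬝ᵥ (Δ.mulVec v) := by
      simp [dotProduct, sq]
    have e4 : ∑ b : Fin m, (Real.sqrt lam * v b) ^ 2 = lam * (v ⬝ᵥ v) := by
      simp only [mul_pow, hsq, ← Finset.mul_sum]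
      simp [dotProduct, sq]
    have e5 : ∑ b : Fin m, Real.sqrt lam ^ 2
        = lam * ((1 : Fin m → ℝ) ⬝ᵥ (1 : Fin m → ℝ)) := by
      simp [dotProduct, hsq, Finset.card_univ, mul_comm]
    rw [e1, e2, e3, e3v, e4, e5] at key
    calc (m:ℝ)^2 = ((Δ.mulVec (1:Fin m → ℝ)) ⬝ᵥ (Δ.mulVec v) + lam * ((1:Fin m → ℝ) ⬝ᵥ v))^2 := by
          rw [← hquad, h1v]
      _ ≤ ((Δ.mulVec (1:Fin m → ℝ)) ⬝ᵥ (Δ.mulVec (1:Fin m → ℝ))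
            + lam * ((1:Fin m → ℝ) ⬝ᵥ (1:Fin m → ℝ)))
          * ((Δ.mulVec v) ⬝ᵥ (Δ.mulVec v) + lam * (v ⬝ᵥ v)) := key
      _ = T * s := by rw [← hquad, ← hquad, ← hT, hvAv]
  -- lower bound on quadratic form: lam * (v ⬝ᵥ v) ≤ s
  have hQ : lam * (v ⬝ᵥ v) ≤ s := by
    have h := hquad v v
    rw [hvAv] at h
    nlinarith [dpnn (Δ.mulVec v)]
  -- upper bound on T
  have hTle : T ≤ (m : ℝ) * (lam + ‖Δ‖ ^ 2) := by
    have hb := Matrix.l2_opNorm_mulVec Δ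
      ((EuclideanSpace.equiv (Fin m) ℝ).symm (1 : Fin m → ℝ))
    have hy : ‖(EuclideanSpace.equiv (Fin N) ℝ).symm (Δ.mulVec (1 : Fin m → ℝ))‖ ^ 2
        = (Δ.mulVec (1:Fin m → ℝ)) ⬝ᵥ (Δ.mulVec (1:Fin m → ℝ)) := by
      rw [EuclideanSpace.norm_eq, Real.sq_sqrt (by positivity)]
      simp [dotProduct, sq, Real.norm_eq_abs, abs_mul_abs_self]
    have hxn : ‖(EuclideanSpace.equiv (Fin m) ℝ).symm (1 : Fin m → ℝ)‖ ^ 2 = (m : ℝ) := by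
      rw [EuclideanSpace.norm_eq, Real.sq_sqrt (by positivity)]
      simp [Finset.card_univ]
    have hb' : ‖(EuclideanSpace.equiv (Fin N) ℝ).symm (Δ.mulVec (1 : Fin m → ℝ))‖
        ≤ ‖Δ‖ * ‖(EuclideanSpace.equiv (Fin m) ℝ).symm (1 : Fin m → ℝ)‖ := hb
    have hx : (Δ.mulVec (1:Fin m → ℝ)) ⬝ᵥ (Δ.mulVec (1:Fin m → ℝ)) ≤ ‖Δ‖ ^ 2 * m := by
      have h2 : (0:ℝ) ≤ ‖Δ‖ := norm_nonneg _
      nlinarith [norm_nonneg ((EuclideanSpace.equiv (Fin N) ℝ).symm (Δ.mulVec (1 : Fin m → ℝ))),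
        norm_nonneg ((EuclideanSpace.equiv (Fin m) ℝ).symm (1 : Fin m → ℝ))]
    rw [hT, hquad, h11]
    nlinarith
  have hTpos : 0 < T := by
    have h := hPD.dotProduct_mulVec_pos (x := (1 : Fin m → ℝ)) (by
      intro h
      have := congrFun h ⟨0, hm⟩
      simp at this)
    simpa [hT, star_trivial] using h
  have hmpos : (0:ℝ) < m := Nat.cast_pos.mpr hm
  have hspos : 0 < s := by nlinarith
  have hvv : 0 ≤ v ⬝ᵥ v := dpnn v
  have hnorm : (0:ℝ) ≤ ‖Δ‖ := norm_nonneg _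
  -- conclude
  have hsum : ∑ i, α i ^ 2 = (1/s)^2 * (v ⬝ᵥ v) := by
    rw [hα]
    simp only [Pi.smul_apply, smul_eq_mul, mul_pow]
    rw [← Finset.mul_sum]
    congr 1
    simp [dotProduct, sq]
  rw [hsum, show (1/s)^2 * (v ⬝ᵥ v) = (v ⬝ᵥ v) / s^2 by ring,
    div_le_div_iff₀ (by positivity) (by positivity)]
  have h1 : (m:ℝ) ≤ (lam + ‖Δ‖^2) * s := by nlinarith
  nlinarith [mul_le_mul_of_nonneg_right hQ hmpos.le]
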